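/- Let R > 0, 0 < β < π, and on the cut plane C_{R,β} = ℂ \ {R cos β + it : |t| ≥ R sin β} define r(s) = √(R² + s² - 2sR cos β) with the principal square root. Then Re[R - s cos β + r(s)] > 0 for all s ∈ C_{R,β}. -/

import Mathlib

/-- The cut plane `C_{R,β} = ℂ \ {R cos β + it : |t| ≥ R sin β}`. -/
def cutPlane (R β : ℝ) : Set ℂ :=
  {s : ℂ | ∀ t : ℝ, R * Real.sin β ≤ |t| → s ≠ (R * Real.cos β : ℂ) + t * Complex.I}

/-- `r(s) = √(R² + s² − 2sR cos β)`, principal branch. -/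
noncomputable def rfun (R β : ℝ) (s : ℂ) : ℂ :=
  ((R : ℂ) ^ 2 + s ^ 2 - 2 * s * R * Real.cos β) ^ ((1 : ℂ) / 2)

/-- `μ(s) = √k · s sin β / √(R − s cos β + r(s))`, principal branches. -/
noncomputable def mufun (k R β : ℝ) (s : ℂ) : ℂ :=
  (Real.sqrt k : ℂ) * s * Real.sin β /
    (((R : ℂ) - s * Real.cos β + rfun R β s) ^ ((1 : ℂ) / 2))

/-- The principal square root has nonnegative real part. -/
lemma re_cpow_half_nonneg (w : ℂ) : 0 ≤ (w ^ ((1 : ℂ) / 2)).re := by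
  rcases eq_or_ne w 0 with rfl | hw
  · rw [Complex.zero_cpow (by norm_num)]
    simp
  · rw [Complex.cpow_def_of_ne_zero hw, Complex.exp_re]
    apply mul_nonneg (Real.exp_nonneg _)
    have him : (Complex.log w * ((1 : ℂ) / 2)).im = w.arg / 2 := by
      simp [Complex.mul_im, Complex.log_im]
      ring
    rw [him]
    apply Real.cos_nonneg_of_neg_pi_div_two_le_of_le
    · have := Complex.neg_pi_lt_arg w; linarith
    · have := Complex.arg_le_pi w; linarith

set_option linter.unnecessarySimpa false in
lemma sq_cpow_half (w : ℂ) : (w ^ ((1 : ℂ) / 2)) ^ 2 = w := by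
  have := Complex.cpow_nat_inv_pow w (n := 2) (by norm_num)
  simpa [one_div] using this

theorem re_pos_on_cutPlane (R β : ℝ) (hR : 0 < R) (hβ0 : 0 < β) (hβπ : β < Real.pi) :
    ∀ s ∈ cutPlane R β, 0 < ((R : ℂ) - s * Real.cos β + rfun R β s).re := by
  intro s _
  set c := Real.cos β with hc
  have hσ : 0 < Real.sin β := Real.sin_pos_of_pos_of_lt_pi hβ0 hβπ
  have hc2 : c ^ 2 < 1 := by
    have := Real.sin_sq_add_cos_sq β
    nlinarith
  set w : ℂ := (R : ℂ) ^ 2 + s ^ 2 - 2 * s * R * c with hw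
  set r : ℂ := w ^ ((1 : ℂ) / 2) with hr
  have hrw : rfun R β s = r := rfl
  have hp : 0 ≤ r.re := re_cpow_half_nonneg w
  have hsq : r ^ 2 = w := sq_cpow_half w
  set x := s.re with hx
  set y := s.im with hy
  set p := r.re with hpd
  set q := r.im with hqd
  -- relations from r² = w
  have hu : p ^ 2 - q ^ 2 = R ^ 2 + x ^ 2 - y ^ 2 - 2 * R * c * x := by
    have := congrArg Complex.re hsq
    simp [hw, Complex.add_re, Complex.sub_re, Complex.mul_re, Complex.mul_im, pow_two] at this
    linarith [this]
  have hv : 2 * p * q = 2 * x * y - 2 * R * c * y := by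
    have := congrArg Complex.im hsq
    simp [hw, Complex.add_im, Complex.sub_im, Complex.mul_re, Complex.mul_im, pow_two] at this
    linarith [this]
  -- the goal's real part
  have hgoal : ((R : ℂ) - s * Real.cos β + rfun R β s).re = R - x * c + p := by
    simp only [hrw, Complex.add_re, Complex.sub_re, Complex.mul_re, Complex.ofReal_re,
      Complex.ofReal_im, mul_zero, sub_zero]
    rfl
  rw [hgoal]
  rcases lt_trichotomy (x * c) R with h | h | h
  · linarith
  · -- x*c = R : show p > 0
    rcases lt_or_eq_of_le hp with hp0 | hp0
    · linarith
    · exfalso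
      rw [← hp0] at hu hv
      have hxne : x ≠ 0 := by
        intro h0; rw [h0] at h; simp at h; linarith
      have hxx : (0:ℝ) < x ^ 2 := by positivity
      have hx2 : R ^ 2 < x ^ 2 := by nlinarith
      have hy0 : y = 0 := by
        have h1 : y * (x - R * c) = 0 := by linarith
        rcases mul_eq_zero.1 h1 with h4 | h4
        · exact h4
        · exfalso
          have hx' : x = R * c := by linarith
          rw [hx'] at h
          nlinarith
      rw [hy0] at hu
      have h2 : 2 * R * c * x = 2 * R ^ 2 := by
        rw [show 2 * R * c * x = 2 * R * (x * c) from by ring, h]; ring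
      nlinarith [sq_nonneg q]
  · -- x*c > R : the hard case
    set a := x * c - R with ha
    have ha0 : 0 < a := by simp [ha]; linarith
    have hxne : x ≠ 0 := by nlinarith
    have hxx : (0:ℝ) < x ^ 2 := by positivity
    have hx2 : R ^ 2 < x ^ 2 := by nlinarith
    -- key identity : v² + 4a²u - 4a⁴ = 4 (1-c²) (y²(x²-R²) + x²a²)
    have key : (2 * x * y - 2 * R * c * y) ^ 2 +
        4 * a ^ 2 * (R ^ 2 + x ^ 2 - y ^ 2 - 2 * R * c * x) - 4 * a ^ 4 =
        4 * (1 - c ^ 2) * (y ^ 2 * (x ^ 2 - R ^ 2) + x ^ 2 * a ^ 2) := by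
      simp only [ha]; ring
    have keypos : 0 < (2 * p * q) ^ 2 + 4 * a ^ 2 * (p ^ 2 - q ^ 2) - 4 * a ^ 4 := by
      rw [hv, hu, key]
      have h1 : 0 ≤ y ^ 2 * (x ^ 2 - R ^ 2) := by
        apply mul_nonneg (sq_nonneg y); linarith
      have h2 : 0 < x ^ 2 * a ^ 2 := mul_pos hxx (pow_pos ha0 2)
      have h3 : (0:ℝ) < 4 * (1 - c ^ 2) := by linarith
      have := mul_pos h3 (by linarith : (0:ℝ) < y ^ 2 * (x ^ 2 - R ^ 2) + x ^ 2 * a ^ 2)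
      linarith
    -- conclude p > a
    by_contra hcon
    push_neg at hcon
    have hpa : p ≤ a := by linarith
    have hp2 : p ^ 2 ≤ a ^ 2 := pow_le_pow_left₀ hp hpa 2
    have e1 : p ^ 2 * q ^ 2 ≤ a ^ 2 * q ^ 2 :=
      mul_le_mul_of_nonneg_right hp2 (sq_nonneg q)
    have e2 : a ^ 2 * p ^ 2 ≤ a ^ 2 * a ^ 2 :=
      mul_le_mul_of_nonneg_left hp2 (sq_nonneg a)
    linarith [keypos, e1, e2]
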